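/- Given a matched pair of monoids (G, H; ⊗, ⊙) and left actions α : H × X → X of H and β : G × X → X of G on a set X satisfying β(g, α(h, x)) = α(g ⊗ h, β(g ⊙ h, x)) for all g, h, x, the map (h, g) ⋆ x := α(h, β(g, x)) defines a left action of the bicrossed product H ⋈ G on X. -/
import Mathlib


/-- Bicrossed product multiplication on `H × G`. -/
def bmul {G H : Type*} [Monoid G] [Monoid H] (ot : G → H → H) (od : G → H → G)
    (p q : H × G) : H × G := (p.1 * ot p.2 q.1, od p.2 q.1 * q.2)

theorem matched_actions_give_bicrossed_action {G H X : Type*} [Monoid G] [Monoid H]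
    (ot : G → H → H) (od : G → H → G)
    (hot_one : ∀ h, ot 1 h = h)
    (hot_mul : ∀ g g' h, ot (g * g') h = ot g (ot g' h))
    (hod_one : ∀ g, od g 1 = g)
    (hod_mul : ∀ g h h', od g (h * h') = od (od g h) h')
    (hot_triv : ∀ g, ot g 1 = 1)
    (hod_triv : ∀ h, od 1 h = 1)
    (bc1 : ∀ g h h', ot g (h * h') = ot g h * ot (od g h) h')
    (bc2 : ∀ g g' h, od (g * g') h = od g (ot g' h) * od g' h)
    (α : H → X → X) (β : G → X → X)
    (hα_one : ∀ x, α 1 x = x)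
    (hα_mul : ∀ h h' x, α (h * h') x = α h (α h' x))
    (hβ_one : ∀ x, β 1 x = x)
    (hβ_mul : ∀ g g' x, β (g * g') x = β g (β g' x))
    (compat : ∀ g h x, β g (α h x) = α (ot g h) (β (od g h) x)) :
    (∀ x : X, α (1 : H) (β (1 : G) x) = x) ∧
    (∀ (p q : H × G) (x : X),
      α (bmul ot od p q).1 (β (bmul ot od p q).2 x) =
        α p.1 (β p.2 (α q.1 (β q.2 x)))) := by
  constructor
  · intro x; rw [hβ_one, hα_one]
  · intro p q x
    simp only [bmul, hα_mul, hβ_mul, compat]
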